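/- Let $c>0$, $\tau\ge 0$ and suppose the coefficient functions $a,b:\mathbb{R}\to\mathbb{R}$ are continuous with $b(t)\ne 0$ for all $t\ne 0$. If $w:\mathbb{R}\to\mathbb{R}$ is a $C^2$ solution of the advanced equation $w''(t)+cw'(t)+a(t)w(t)+b(t+c\tau)w(t+c\tau)=0$ and there exists $t'$ such that $w(t)=0$ for all $t\le t'$ (or $w(t)=0$ for all $t\ge t'$), then $w\equiv 0$ on $\mathbb{R}$. -/

import Mathlib

open Set

/-- Uniqueness for the linear 2nd order ODE `w'' + c w' + q w = 0` on an interval,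
with zero data at a point `t₀` of the interval. -/
lemma linear2_zero (q : ℝ → ℝ) (c : ℝ) (hq : Continuous q)
    (w : ℝ → ℝ) (hw : ContDiff ℝ 2 w)
    (A B t₀ : ℝ) (ht₀ : t₀ ∈ Icc A B)
    (heq : ∀ t ∈ Icc A B, deriv (deriv w) t + c * deriv w t + q t * w t = 0)
    (h0 : w t₀ = 0) (h0' : deriv w t₀ = 0) :
    ∀ t ∈ Icc A B, w t = 0 := by
  have hAB : A ≤ B := ht₀.1.trans ht₀.2
  rw [show (2 : WithTop ℕ∞) = 1 + 1 from by norm_num, contDiff_succ_iff_deriv] at hw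
  have h2 := hw.2.2
  rw [contDiff_one_iff_deriv] at h2
  have hdw : ∀ t, HasDerivAt w (deriv w t) t := fun t => (hw.1 t).hasDerivAt
  have hddw : ∀ t, HasDerivAt (deriv w) (deriv (deriv w) t) t := fun t => (h2.1 t).hasDerivAt
  -- clamped coefficient
  set Qc : ℝ → ℝ := fun t => q (max A (min t B)) with hQc
  have hclamp : ∀ t, max A (min t B) ∈ Icc A B := by
    intro t
    constructor
    · exact le_max_left _ _
    · exact max_le hAB (min_le_right _ _)
  have hQcont : Continuous Qc :=
    hq.comp (continuous_const.max (continuous_id.min continuous_const))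
  have hQeq : ∀ t ∈ Icc A B, Qc t = q t := by
    intro t ht
    simp only [hQc]
    rw [min_eq_left ht.2, max_eq_right ht.1]
  obtain ⟨M, hM⟩ := isCompact_Icc.exists_bound_of_continuousOn hq.continuousOn
  have hM0 : 0 ≤ M := le_trans (norm_nonneg _) (hM t₀ ht₀)
  have hQb : ∀ t, |Qc t| ≤ M := fun t => hM _ (hclamp t)
  -- the vector field
  set v : ℝ → ℝ × ℝ → ℝ × ℝ := fun t p => (p.2, -(c * p.2) - Qc t * p.1) with hv
  set K : NNReal := Real.toNNReal (1 + |c| + M) with hK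
  have hKval : (K : ℝ) = 1 + |c| + M := Real.coe_toNNReal _ (by positivity)
  have hlip : ∀ t, LipschitzWith K (v t) := by
    intro t
    apply LipschitzWith.of_dist_le_mul
    intro p p'
    rw [Prod.dist_eq, hKval]
    have h1 : dist p.1 p'.1 ≤ dist p p' := by rw [Prod.dist_eq]; exact le_max_left _ _
    have h2 : dist p.2 p'.2 ≤ dist p p' := by rw [Prod.dist_eq]; exact le_max_right _ _
    have hd : 0 ≤ dist p p' := dist_nonneg
    have e1 : dist (v t p).1 (v t p').1 = dist p.2 p'.2 := rfl
    have e2 : dist (v t p).2 (v t p').2 ≤ (|c| + M) * dist p p' := by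
      simp only [hv, Real.dist_eq] at *
      have : -(c * p.2) - Qc t * p.1 - (-(c * p'.2) - Qc t * p'.1)
          = -(c * (p.2 - p'.2)) - Qc t * (p.1 - p'.1) := by ring
      rw [this]
      calc |(-(c * (p.2 - p'.2)) - Qc t * (p.1 - p'.1))|
          ≤ |c * (p.2 - p'.2)| + |Qc t * (p.1 - p'.1)| := by
            refine le_trans (abs_sub _ _) ?_
            rw [abs_neg]
        _ = |c| * |p.2 - p'.2| + |Qc t| * |p.1 - p'.1| := by rw [abs_mul, abs_mul]
        _ ≤ |c| * dist p p' + M * dist p p' := by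
            apply add_le_add
            · exact mul_le_mul_of_nonneg_left h2 (abs_nonneg _)
            · exact mul_le_mul (hQb t) h1 (abs_nonneg _) hM0
        _ = (|c| + M) * dist p p' := by ring
    apply max_le
    · rw [e1]; nlinarith [abs_nonneg c]
    · refine le_trans e2 ?_; nlinarith [abs_nonneg c]
  set f : ℝ → ℝ × ℝ := fun t => (w t, deriv w t) with hf
  set g : ℝ → ℝ × ℝ := fun _ => ((0:ℝ), (0:ℝ)) with hg
  have hfc : ContinuousOn f (Icc A B) :=
    ((hw.1.continuous).prodMk h2.1.continuous).continuousOn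
  have hgc : ContinuousOn g (Icc A B) := continuousOn_const
  have hfd : ∀ t ∈ Icc A B, HasDerivAt f (v t (f t)) t := by
    intro t ht
    have hveq : v t (f t) = (deriv w t, deriv (deriv w) t) := by
      simp only [hv, hf]
      have := heq t ht
      rw [hQeq t ht]
      ext
      · rfl
      · simp only; linarith
    rw [hveq]
    exact (hdw t).prodMk (hddw t)
  have hgd : ∀ t : ℝ, HasDerivAt g (v t (g t)) t := by
    intro t
    have : v t (g t) = ((0:ℝ), (0:ℝ)) := by simp [hv, hg]
    rw [this]
    exact hasDerivAt_const _ _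
  have hinit : f t₀ = g t₀ := by simp [hf, hg, h0, h0']
  have hlip' : ∀ t, LipschitzOnWith K (v t) univ := fun t => (hlip t).lipschitzOnWith
  have key : ∀ t ∈ Icc A B, f t = g t := by
    intro t ht
    rcases le_total t t₀ with h | h
    · have := ODE_solution_unique_of_mem_Icc_left (fun t _ => hlip' t)
        (hfc.mono (Icc_subset_Icc_right ht₀.2))
        (fun u hu => (hfd u ⟨hu.1.le, hu.2.trans ht₀.2⟩).hasDerivWithinAt)
        (fun _ _ => mem_univ _)
        (hgc.mono (Icc_subset_Icc_right ht₀.2))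
        (fun u _ => (hgd u).hasDerivWithinAt)
        (fun _ _ => mem_univ _) hinit
      exact this ⟨ht.1, h⟩
    · have := ODE_solution_unique_of_mem_Icc_right (fun t _ => hlip' t)
        (hfc.mono (Icc_subset_Icc_left ht₀.1))
        (fun u hu => (hfd u ⟨ht₀.1.trans hu.1, hu.2.le⟩).hasDerivWithinAt)
        (fun _ _ => mem_univ _)
        (hgc.mono (Icc_subset_Icc_left ht₀.1))
        (fun u _ => (hgd u).hasDerivWithinAt)
        (fun _ _ => mem_univ _) hinit
      exact this ⟨h, ht.2⟩
  intro t ht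
  have := key t ht
  exact congrArg Prod.fst this

/-- A continuous function vanishing on a set vanishes on its closure. -/
lemma zero_on_closure {g : ℝ → ℝ} (hg : Continuous g) {S : Set ℝ}
    (h : ∀ t ∈ S, g t = 0) {x : ℝ} (hx : x ∈ closure S) : g x = 0 :=
  (isClosed_singleton.preimage hg).closure_subset_iff.mpr
    (fun t ht => mem_preimage.mpr (h t ht)) hx

/-- If a solution `w` of the advanced (formally adjoint) equation
`w'' + cw' + a(t)w + b(t+cτ)w(t+cτ) = 0`, with `b(t) ≠ 0` for `t ≠ 0`, vanishes
on a half-line `(-∞, t']` or `[t', ∞)`, then `w ≡ 0`. -/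
theorem adjoint_no_halfline_vanishing (a b : ℝ → ℝ) (c τ : ℝ)
    (hc : 0 < c) (hτ : 0 ≤ τ)
    (hacont : Continuous a) (hbcont : Continuous b)
    (hbne : ∀ t : ℝ, t ≠ 0 → b t ≠ 0)
    (w : ℝ → ℝ) (hw : ContDiff ℝ 2 w)
    (heq : ∀ t, deriv (deriv w) t + c * deriv w t + a t * w t
      + b (t + c * τ) * w (t + c * τ) = 0)
    (hvanish : ∃ t' : ℝ, (∀ t ≤ t', w t = 0) ∨ (∀ t ≥ t', w t = 0)) :
    ∀ t, w t = 0 := by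
  have hw2 := hw
  rw [show (2 : WithTop ℕ∞) = 1 + 1 from by norm_num, contDiff_succ_iff_deriv] at hw2
  have h2 := hw2.2.2
  rw [contDiff_one_iff_deriv] at h2
  have cw : Continuous w := hw2.1.continuous
  have cdw : Continuous (deriv w) := h2.1.continuous
  have cddw : Continuous (deriv (deriv w)) := h2.2
  have hd0 : 0 ≤ c * τ := mul_nonneg hc.le hτ
  obtain ⟨t', hv⟩ := hvanish
  by_cases hd : c * τ = 0
  · -- no delay: 2nd-order linear ODE with coefficient a + b
    have heq' : ∀ t, deriv (deriv w) t + c * deriv w t + (a t + b t) * w t = 0 := by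
      intro t
      have := heq t
      rw [hd, add_zero] at this
      linarith
    have key : w t' = 0 ∧ deriv w t' = 0 := by
      rcases hv with h | h
      · refine ⟨h t' le_rfl, ?_⟩
        apply zero_on_closure cdw (S := Iio t')
        · intro u hu
          have : w =ᶠ[nhds u] fun _ => 0 :=
            Filter.eventually_of_mem (Iio_mem_nhds hu) (fun v hv' => h v hv'.le)
          rw [this.deriv_eq, deriv_const]
        · rw [closure_Iio]; exact self_mem_Iic
      · refine ⟨h t' le_rfl, ?_⟩
        apply zero_on_closure cdw (S := Ioi t')
        · intro u hu
          have : w =ᶠ[nhds u] fun _ => 0 :=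
            Filter.eventually_of_mem (Ioi_mem_nhds hu) (fun v hv' => h v hv'.le)
          rw [this.deriv_eq, deriv_const]
        · rw [closure_Ioi]; exact self_mem_Ici
    intro t
    exact linear2_zero (fun u => a u + b u) c (hacont.add hbcont) w hw
      (min t t') (max t t') t' ⟨min_le_right _ _, le_max_right _ _⟩
      (fun u _ => heq' u) key.1 key.2 t ⟨min_le_left _ _, le_max_left _ _⟩
  · have hdpos : 0 < c * τ := lt_of_le_of_ne hd0 (Ne.symm hd)
    rcases hv with h | h
    · -- vanishing on the left: propagate forward
      have stepF : ∀ s, (∀ t ≤ s, w t = 0) → ∀ t ≤ s + c * τ, w t = 0 := by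
        intro s h0
        have hdw : ∀ t ≤ s, deriv w t = 0 := by
          intro t ht
          rcases lt_or_eq_of_le ht with ht | ht
          · have : w =ᶠ[nhds t] fun _ => 0 :=
              Filter.eventually_of_mem (Iio_mem_nhds ht) (fun v hv' => h0 v hv'.le)
            rw [this.deriv_eq, deriv_const]
          · subst ht
            apply zero_on_closure cdw (S := Iio t)
            · intro u hu
              have : w =ᶠ[nhds u] fun _ => 0 :=
                Filter.eventually_of_mem (Iio_mem_nhds hu) (fun v hv' => h0 v hv'.le)
              rw [this.deriv_eq, deriv_const]
            · rw [closure_Iio]; exact self_mem_Iic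
        have hddw : ∀ t ≤ s, deriv (deriv w) t = 0 := by
          intro t ht
          rcases lt_or_eq_of_le ht with ht | ht
          · have : deriv w =ᶠ[nhds t] fun _ => 0 :=
              Filter.eventually_of_mem (Iio_mem_nhds ht) (fun v hv' => hdw v hv'.le)
            rw [this.deriv_eq, deriv_const]
          · subst ht
            apply zero_on_closure cddw (S := Iio t)
            · intro u hu
              have : deriv w =ᶠ[nhds u] fun _ => 0 :=
                Filter.eventually_of_mem (Iio_mem_nhds hu) (fun v hv' => hdw v hv'.le)
              rw [this.deriv_eq, deriv_const]
            · rw [closure_Iio]; exact self_mem_Iic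
        have key : ∀ u, u ≤ s + c * τ → u ≠ 0 → w u = 0 := by
          intro u hu hne
          have ht : u - c * τ ≤ s := by linarith
          have := heq (u - c * τ)
          rw [hddw _ ht, hdw _ ht, h0 _ ht, sub_add_cancel] at this
          have hb0 : b u * w u = 0 := by linarith
          exact (mul_eq_zero.mp hb0).resolve_left (hbne u hne)
        intro t ht
        by_cases h0t : t = 0
        · subst h0t
          apply zero_on_closure cw (S := Iio 0)
          · intro u hu
            exact key u (le_trans hu.le ht) (ne_of_lt hu)
          · rw [closure_Iio]; exact self_mem_Iic
        · exact key t ht h0t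
      have hn : ∀ n : ℕ, ∀ t ≤ t' + n * (c * τ), w t = 0 := by
        intro n
        induction n with
        | zero => intro t ht; exact h t (by simpa using ht)
        | succ n ih =>
          intro t ht
          apply stepF (t' + n * (c * τ)) ih
          push_cast at ht ⊢
          linarith
      intro t
      obtain ⟨n, hn'⟩ := exists_nat_ge ((t - t') / (c * τ))
      apply hn n
      rw [div_le_iff₀ hdpos] at hn'
      linarith
    · -- vanishing on the right: propagate backward via ODE uniqueness
      have stepB : ∀ s, (∀ t ≥ s, w t = 0) → ∀ t ≥ s - c * τ, w t = 0 := by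
        intro s h0
        have hdws : deriv w s = 0 := by
          apply zero_on_closure cdw (S := Ioi s)
          · intro u hu
            have : w =ᶠ[nhds u] fun _ => 0 :=
              Filter.eventually_of_mem (Ioi_mem_nhds hu) (fun v hv' => h0 v hv'.le)
            rw [this.deriv_eq, deriv_const]
          · rw [closure_Ioi]; exact self_mem_Ici
        have heqI : ∀ t ∈ Icc (s - c * τ) s,
            deriv (deriv w) t + c * deriv w t + a t * w t = 0 := by
          intro t ht
          have := heq t
          rw [h0 (t + c * τ) (by linarith [ht.1]), mul_zero, add_zero] at this
          exact this
        have hz := linear2_zero a c hacont w hw (s - c * τ) s s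
          ⟨by linarith, le_rfl⟩ heqI (h0 s le_rfl) hdws
        intro t ht
        rcases le_total t s with hts | hts
        · exact hz t ⟨ht, hts⟩
        · exact h0 t hts
      have hn : ∀ n : ℕ, ∀ t ≥ t' - n * (c * τ), w t = 0 := by
        intro n
        induction n with
        | zero => intro t ht; exact h t (by simpa using ht)
        | succ n ih =>
          intro t ht
          apply stepB (t' - n * (c * τ)) ih
          push_cast at ht ⊢
          linarith
      intro t
      obtain ⟨n, hn'⟩ := exists_nat_ge ((t' - t) / (c * τ))
      apply hn n
      rw [div_le_iff₀ hdpos] at hn'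
      linarith
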